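/- On the set of monic real polynomials P = x^d − (a_{d−1}x^{d−1} + … + a_0) with |a_i|^{d−i} ≤ M for all i (M ≥ 1), each virtual root function ρ_{d,j} is uniformly continuous with modulus of uniform continuity ω(M,ε) = 2M·(ε/(d(d+1)(2d−1)M))^d with respect to the l¹ norm on the coefficients. -/

import Mathlib

open Polynomial Set

noncomputable def monicPoly (d : ℕ) (c : Fin d → ℝ) : Polynomial ℝ :=
  X ^ d + ∑ i : Fin d, C (c i) * X ^ (i : ℕ)

noncomputable def dCoeff {d : ℕ} (c : Fin (d + 1) → ℝ) : Fin d → ℝ :=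
  fun i => c i.succ * ((i : ℕ) + 1) / (d + 1)

noncomputable def bnd {d : ℕ} (c : Fin d → ℝ) : ℝ := 1 + ⨆ i, |c i|

/-- The point of `[a,b]` where `|P|` attains its minimum. -/
noncomputable def Rmin (a b : ℝ) (P : Polynomial ℝ) : ℝ :=
  if h : a ≤ b then
    (isCompact_Icc.exists_isMinOn (Set.nonempty_Icc.mpr h)
      ((continuous_abs.comp P.continuous).continuousOn)).choose
  else a

/-- The `j`-th virtual root of the monic polynomial with coefficient vector `c`,
defined inductively as the minimizer of `|P|` between consecutive virtual roots
of `P/d`, infinite endpoints being handled by the Cauchy root bound `bnd`. -/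
noncomputable def vroot : (d : ℕ) → ℤ → (Fin d → ℝ) → ℝ
  | 0, _, _ => 0
  | d + 1, j, c =>
    Rmin (if 1 < j then vroot d (j - 1) (dCoeff c) else -(bnd c))
      (if j < (d : ℤ) + 1 then vroot d j (dCoeff c) else bnd c)
      (monicPoly (d + 1) c)
lemma sum_deg_lt (d : ℕ) (c : Fin d → ℝ) :
    (∑ i : Fin d, C (c i) * X ^ (i : ℕ) : Polynomial ℝ).degree < (d : ℕ) := by
  apply lt_of_le_of_lt (degree_sum_le _ _)
  rw [Finset.sup_lt_iff (by exact_mod_cast WithBot.bot_lt_coe d)]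
  intro i _
  exact lt_of_le_of_lt (degree_C_mul_X_pow_le _ _) (by exact_mod_cast i.2)

lemma monicPoly_monic (d : ℕ) (c : Fin d → ℝ) : (monicPoly d c).Monic :=
  monic_X_pow_add (sum_deg_lt d c)

lemma monicPoly_natDegree (d : ℕ) (c : Fin d → ℝ) : (monicPoly d c).natDegree = d := by
  have h : (monicPoly d c).degree = d := by
    unfold monicPoly
    rw [degree_add_eq_left_of_degree_lt (by rw [degree_X_pow]; exact sum_deg_lt d c),
      degree_X_pow]
  exact natDegree_eq_of_degree_eq_some h

lemma derivative_monicPoly (d : ℕ) (c : Fin (d + 1) → ℝ) :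
    derivative (monicPoly (d + 1) c) = C ((d : ℝ) + 1) * monicPoly d (dCoeff c) := by
  unfold monicPoly
  rw [derivative_add, derivative_X_pow, derivative_sum, mul_add, Finset.mul_sum]
  congr 1
  · push_cast; ring
  · rw [Fin.sum_univ_succ]
    simp only [Fin.val_zero, pow_zero, mul_one, derivative_C, zero_add]
    refine Finset.sum_congr rfl fun i _ => ?_
    rw [derivative_C_mul, derivative_X_pow]
    have h1 : (i.succ : ℕ) = (i : ℕ) + 1 := rfl
    have h2 : ((d : ℝ) + 1) * (dCoeff c i) = c i.succ * ((i : ℕ) + 1) := by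
      unfold dCoeff; field_simp
    rw [h1]
    rw [show (C (c i.succ) : Polynomial ℝ) * (C ((((i:ℕ)+1 : ℕ)) : ℝ) * X ^ (((i:ℕ)+1) - 1)) =
      C (c i.succ * (((i:ℕ)+1 : ℝ))) * X ^ (i:ℕ) by push_cast; rw [C_mul]; ring_nf]
    rw [← h2, C_mul]
    ring
lemma abs_le_sup {d : ℕ} (c : Fin d → ℝ) (i : Fin d) : |c i| ≤ ⨆ j, |c j| :=
  le_ciSup (f := fun j => |c j|) (Set.Finite.bddAbove (Set.finite_range _)) i

lemma sup_abs_nonneg {d : ℕ} (c : Fin d → ℝ) : 0 ≤ ⨆ i, |c i| := by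
  cases d with
  | zero => simp [ciSup_of_empty]
  | succ n => exact le_trans (abs_nonneg (c 0)) (abs_le_sup c 0)

lemma one_le_bnd {d : ℕ} (c : Fin d → ℝ) : 1 ≤ bnd c := by
  have := sup_abs_nonneg c; unfold bnd; linarith

lemma bnd_le_bnd_add {d : ℕ} (c c' : Fin d → ℝ) :
    bnd c ≤ bnd c' + ∑ i, |c i - c' i| := by
  unfold bnd
  cases d with
  | zero => simp [ciSup_of_empty]
  | succ n =>
    have h : (⨆ i, |c i|) ≤ (⨆ i, |c' i|) + ∑ i, |c i - c' i| := by
      apply ciSup_le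
      intro i
      have h1 : |c i| ≤ |c' i| + |c i - c' i| := by
        have := abs_sub_abs_le_abs_sub (c i) (c' i); linarith [abs_sub_comm (c i) (c' i)]
      have h2 : |c i - c' i| ≤ ∑ j, |c j - c' j| :=
        Finset.single_le_sum (f := fun j => |c j - c' j|) (fun j _ => abs_nonneg _)
          (Finset.mem_univ i)
      linarith [abs_le_sup c' i]
    linarith

lemma abs_dCoeff_le {d : ℕ} (c : Fin (d + 1) → ℝ) (i : Fin d) :
    |dCoeff c i| ≤ |c i.succ| := by
  unfold dCoeff
  rw [abs_div, abs_mul]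
  rw [div_le_iff₀ (by positivity)]
  have h1 : |((i : ℕ) : ℝ) + 1| = (i : ℕ) + 1 := abs_of_nonneg (by positivity)
  have h2 : |((d : ℕ) : ℝ) + 1| = (d : ℕ) + 1 := abs_of_nonneg (by positivity)
  rw [h1, h2]
  have h3 : ((i : ℕ) : ℝ) < (d : ℕ) := by exact_mod_cast i.2
  nlinarith [abs_nonneg (c i.succ)]

lemma bnd_dCoeff_le {d : ℕ} (c : Fin (d + 1) → ℝ) : bnd (dCoeff c) ≤ bnd c := by
  unfold bnd
  cases d with
  | zero =>
    have h0 : (⨆ i : Fin 0, |dCoeff c i|) = 0 := by simp [ciSup_of_empty]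
    rw [h0]; linarith [sup_abs_nonneg c]
  | succ n =>
    have : (⨆ i, |dCoeff c i|) ≤ ⨆ i, |c i| :=
      ciSup_le fun i => le_trans (abs_dCoeff_le c i) (abs_le_sup c i.succ)
    linarith

lemma dCoeff_l1 {d : ℕ} (c c' : Fin (d + 1) → ℝ) :
    ∑ i, |dCoeff c i - dCoeff c' i| ≤ ∑ i, |c i - c' i| := by
  rw [Fin.sum_univ_succ (f := fun i => |c i - c' i|)]
  have h : ∀ i : Fin d, |dCoeff c i - dCoeff c' i| ≤ |c i.succ - c' i.succ| := by
    intro i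
    have he : dCoeff c i - dCoeff c' i = (c i.succ - c' i.succ) * ((i : ℕ) + 1) / (d + 1) := by
      unfold dCoeff; ring
    rw [he, abs_div, abs_mul]
    rw [div_le_iff₀ (by positivity)]
    have h1 : |((i : ℕ) : ℝ) + 1| = (i : ℕ) + 1 := abs_of_nonneg (by positivity)
    have h2 : |((d : ℕ) : ℝ) + 1| = (d : ℕ) + 1 := abs_of_nonneg (by positivity)
    rw [h1, h2]
    have h3 : ((i : ℕ) : ℝ) < (d : ℕ) := by exact_mod_cast i.2
    nlinarith [abs_nonneg (c i.succ - c' i.succ)]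
  have hs : ∑ i : Fin d, |dCoeff c i - dCoeff c' i| ≤ ∑ i : Fin d, |c i.succ - c' i.succ| :=
    Finset.sum_le_sum fun i _ => h i
  have h0 : (0:ℝ) ≤ |c 0 - c' 0| := abs_nonneg _
  linarith

/-- Cauchy bound: complex roots of `monicPoly d c` have modulus `< bnd c`. -/
lemma root_abs_lt_bnd {d : ℕ} (c : Fin d → ℝ) (z : ℂ)
    (hz : eval z ((monicPoly d c).map (algebraMap ℝ ℂ)) = 0) :
    ‖z‖ < bnd c := by
  by_contra hle
  push_neg at hle
  set t := ‖z‖ with ht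
  have ht1 : 1 ≤ t := le_trans (one_le_bnd c) hle
  have heval : (z : ℂ) ^ d + ∑ i : Fin d, (c i : ℂ) * z ^ (i : ℕ) = 0 := by
    rw [← hz]
    simp [monicPoly, Polynomial.map_add, Polynomial.map_pow, Polynomial.map_sum,
      Polynomial.map_mul, eval_finset_sum]
  have hzd : z ^ d = -∑ i : Fin d, (c i : ℂ) * z ^ (i : ℕ) := by linear_combination heval
  have habs : t ^ d ≤ ∑ i : Fin d, |c i| * t ^ (i : ℕ) := by
    calc t ^ d = ‖z ^ d‖ := by rw [norm_pow]
    _ = ‖∑ i : Fin d, (c i : ℂ) * z ^ (i : ℕ)‖ := by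
        rw [hzd, norm_neg]
    _ ≤ ∑ i : Fin d, ‖(c i : ℂ) * z ^ (i : ℕ)‖ := norm_sum_le _ _
    _ = ∑ i : Fin d, |c i| * t ^ (i : ℕ) := by
        refine Finset.sum_congr rfl fun i _ => ?_
        rw [norm_mul, norm_pow, Complex.norm_real, Real.norm_eq_abs]
  set s := ⨆ i, |c i| with hs
  have hsub : ∑ i : Fin d, |c i| * t ^ (i : ℕ) ≤ s * ∑ i : Fin d, t ^ (i : ℕ) := by
    rw [Finset.mul_sum]
    refine Finset.sum_le_sum fun i _ => ?_
    exact mul_le_mul_of_nonneg_right (abs_le_sup c i) (by positivity)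
  have hgeom : (∑ i : Fin d, t ^ (i : ℕ)) * (t - 1) = t ^ d - 1 := by
    rw [Fin.sum_univ_eq_sum_range]
    exact geom_sum_mul t d
  have hsum_nonneg : 0 ≤ ∑ i : Fin d, t ^ (i : ℕ) :=
    Finset.sum_nonneg fun i _ => by positivity
  have hst : s ≤ t - 1 := by
    have hb : bnd c = 1 + s := rfl
    rw [hb] at hle; linarith
  have : s * ∑ i : Fin d, t ^ (i : ℕ) ≤ t ^ d - 1 := by
    calc s * ∑ i : Fin d, t ^ (i : ℕ) ≤ (t - 1) * ∑ i : Fin d, t ^ (i : ℕ) :=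
      mul_le_mul_of_nonneg_right hst hsum_nonneg
    _ = t ^ d - 1 := by rw [mul_comm]; exact hgeom
  linarith

lemma root_abs_lt_bnd_real {d : ℕ} (c : Fin d → ℝ) (x : ℝ)
    (hx : eval x (monicPoly d c) = 0) : |x| < bnd c := by
  have h : eval (algebraMap ℝ ℂ x) ((monicPoly d c).map (algebraMap ℝ ℂ)) = 0 := by
    rw [eval_map, eval₂_at_apply, hx, map_zero]
  have := root_abs_lt_bnd c (algebraMap ℝ ℂ x) h
  simpa using this

lemma eval_monicPoly (d : ℕ) (c : Fin d → ℝ) (x : ℝ) :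
    eval x (monicPoly d c) = x ^ d + ∑ i : Fin d, c i * x ^ (i : ℕ) := by
  simp [monicPoly, eval_finset_sum]

lemma Rmin_spec {a b : ℝ} {P : Polynomial ℝ} (h : a ≤ b) :
    Rmin a b P ∈ Icc a b ∧ ∀ y ∈ Icc a b, |eval (Rmin a b P) P| ≤ |eval y P| := by
  unfold Rmin
  rw [dif_pos h]
  obtain ⟨hmem, hmin⟩ := (isCompact_Icc.exists_isMinOn (Set.nonempty_Icc.mpr h)
      ((continuous_abs.comp P.continuous).continuousOn)).choose_spec
  exact ⟨hmem, fun y hy => isMinOn_iff.mp hmin y hy⟩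

lemma Rmin_eq_left {a b : ℝ} {P : Polynomial ℝ} (h : ¬ a ≤ b) : Rmin a b P = a :=
  dif_neg h

lemma min_interior_deriv {P : Polynomial ℝ} {a b x : ℝ}
    (hmin : ∀ y ∈ Icc a b, |eval x P| ≤ |eval y P|) (hx : x ∈ Ioo a b)
    (hne : eval x P ≠ 0) : eval x P.derivative = 0 := by
  have hloc : IsLocalMin (fun y => eval y P * eval y P) x := by
    filter_upwards [isOpen_Ioo.mem_nhds hx] with y hy
    have h1 := hmin y (Ioo_subset_Icc_self hy)
    have h2 := hmin x (Ioo_subset_Icc_self hx)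
    calc eval x P * eval x P = |eval x P| * |eval x P| := (abs_mul_abs_self _).symm
    _ ≤ |eval y P| * |eval y P| :=
        mul_le_mul h1 h1 (abs_nonneg _) (abs_nonneg _)
    _ = eval y P * eval y P := abs_mul_abs_self _
  have hd : HasDerivAt (fun y => eval y P * eval y P)
      (eval x P.derivative * eval x P + eval x P * eval x P.derivative) x :=
    (P.hasDerivAt x).mul (P.hasDerivAt x)
  have h0 := hloc.deriv_eq_zero
  rw [hd.deriv] at h0
  have : eval x P * eval x P.derivative = 0 := by linarith [h0]
  rcases mul_eq_zero.mp this with h | h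
  · exact absurd h hne
  · exact h

/-- `x` is a root of one of the (normalized) derivatives of `monicPoly d c`,
or one of the `±bnd` values along the derivative tower. -/
def good : (d : ℕ) → (Fin d → ℝ) → ℝ → Prop
  | 0, _, _ => False
  | d + 1, c, x => eval x (monicPoly (d + 1) c) = 0 ∨ x = bnd c ∨ x = -(bnd c) ∨
      good d (dCoeff c) x

lemma root_good : ∀ (d : ℕ) (c : Fin d → ℝ) (x : ℝ),
    eval x (monicPoly d c) = 0 → good d c x := by
  intro d c x h
  cases d with
  | zero => simp [eval_monicPoly] at h
  | succ n => exact Or.inl h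

lemma good_abs_le : ∀ (d : ℕ) (c : Fin d → ℝ) (x : ℝ), good d c x → |x| ≤ bnd c := by
  intro d
  induction d with
  | zero => intro c x h; exact absurd h (by simp [good])
  | succ n ih =>
    intro c x h
    rcases h with h | h | h | h
    · exact le_of_lt (root_abs_lt_bnd_real c x h)
    · rw [h, abs_of_nonneg (by linarith [one_le_bnd c])]
    · rw [h, abs_neg, abs_of_nonneg (by linarith [one_le_bnd c])]
    · exact le_trans (ih _ _ h) (bnd_dCoeff_le c)

lemma vroot_good : ∀ (d : ℕ) (j : ℤ) (c : Fin d → ℝ), 1 ≤ j → j ≤ d →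
    good d c (vroot d j c) := by
  intro d
  induction d with
  | zero => intro j c h1 h2; omega
  | succ n ih =>
    intro j c hj1 hjn
    rw [show vroot (n+1) j c = Rmin (if 1 < j then vroot n (j - 1) (dCoeff c) else -(bnd c))
      (if j < (n : ℤ) + 1 then vroot n j (dCoeff c) else bnd c) (monicPoly (n + 1) c) from rfl]
    set A := if 1 < j then vroot n (j - 1) (dCoeff c) else -(bnd c) with hA
    set B := if j < (n : ℤ) + 1 then vroot n j (dCoeff c) else bnd c with hB
    have goodA : good (n + 1) c A := by
      by_cases h1j : 1 < j
      · rw [hA, if_pos h1j]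
        exact Or.inr (Or.inr (Or.inr (ih (j - 1) (dCoeff c) (by omega) (by omega))))
      · rw [hA, if_neg h1j]; exact Or.inr (Or.inr (Or.inl rfl))
    have goodB : good (n + 1) c B := by
      by_cases hjn1 : j < (n : ℤ) + 1
      · rw [hB, if_pos hjn1]
        exact Or.inr (Or.inr (Or.inr (ih j (dCoeff c) hj1 (by omega))))
      · rw [hB, if_neg hjn1]; exact Or.inr (Or.inl rfl)
    by_cases hab : A ≤ B
    · obtain ⟨hmem, hmin⟩ := Rmin_spec (P := monicPoly (n+1) c) hab
      set x := Rmin A B (monicPoly (n + 1) c) with hx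
      by_cases hroot : eval x (monicPoly (n+1) c) = 0
      · exact Or.inl hroot
      · rcases eq_or_lt_of_le hmem.1 with hxa | hxa
        · rwa [← hxa]
        · rcases eq_or_lt_of_le hmem.2 with hxb | hxb
          · rwa [hxb]
          · have hderiv := min_interior_deriv hmin ⟨hxa, hxb⟩ hroot
            rw [derivative_monicPoly, eval_mul, eval_C] at hderiv
            have : eval x (monicPoly n (dCoeff c)) = 0 := by
              have hn0 : ((n : ℝ) + 1) ≠ 0 := by positivity
              exact (mul_eq_zero.mp hderiv).resolve_left hn0
            exact Or.inr (Or.inr (Or.inr (root_good n (dCoeff c) x this)))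
    · rw [Rmin_eq_left hab]; exact goodA

lemma vroot_abs_le {d : ℕ} {j : ℤ} (c : Fin d → ℝ) (hj1 : 1 ≤ j) (hjd : j ≤ d) :
    |vroot d j c| ≤ bnd c :=
  good_abs_le d c _ (vroot_good d j c hj1 hjd)

lemma vroot_unfold (n : ℕ) (j : ℤ) (c : Fin (n+1) → ℝ) :
    vroot (n+1) j c = Rmin (if 1 < j then vroot n (j - 1) (dCoeff c) else -(bnd c))
      (if j < (n : ℤ) + 1 then vroot n j (dCoeff c) else bnd c) (monicPoly (n + 1) c) := rfl

lemma vroot_step : ∀ (d : ℕ) (c : Fin d → ℝ) (j : ℤ), 1 ≤ j → j < d →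
    vroot d j c ≤ vroot d (j + 1) c := by
  intro d
  induction d with
  | zero => intro c j h1 h2; omega
  | succ n ih =>
    intro c j hj1 hjd
    have hjn : j ≤ (n : ℤ) := by exact_mod_cast Int.lt_add_one_iff.mp hjd
    set mid := vroot n j (dCoeff c) with hmid
    have hn1 : 1 ≤ (n : ℤ) := le_trans hj1 hjn
    have hBeq : (if j < (n : ℤ) + 1 then vroot n j (dCoeff c) else bnd c) = mid :=
      if_pos (by omega)
    have hAB : (if 1 < j then vroot n (j - 1) (dCoeff c) else -(bnd c)) ≤ mid := by
      by_cases h1j : 1 < j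
      · rw [if_pos h1j]
        have := ih (dCoeff c) (j - 1) (by omega) (by omega)
        simpa using this
      · rw [if_neg h1j]
        have hb := vroot_abs_le (dCoeff c) (le_refl 1) (by omega)
        have habs := abs_le.mp hb
        have hbb := bnd_dCoeff_le c
        have hj1' : j = 1 := by omega
        rw [hmid, hj1']
        linarith [habs.1]
    have claim1 : vroot (n+1) j c ≤ mid := by
      rw [vroot_unfold, hBeq]
      exact (Rmin_spec (P := monicPoly (n+1) c) hAB).1.2
    have claim2 : mid ≤ vroot (n+1) (j+1) c := by
      rw [vroot_unfold]
      have hAeq : (if 1 < j + 1 then vroot n (j + 1 - 1) (dCoeff c) else -(bnd c)) = mid := by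
        rw [if_pos (by omega : 1 < j + 1)]
        norm_num
        exact hmid.symm
      rw [hAeq]
      by_cases hab : mid ≤ (if j + 1 < (n : ℤ) + 1 then vroot n (j + 1) (dCoeff c) else bnd c)
      · exact (Rmin_spec (P := monicPoly (n+1) c) hab).1.1
      · rw [Rmin_eq_left hab]
    exact le_trans claim1 claim2

lemma vroot_mono {d : ℕ} (c : Fin d → ℝ) {i j : ℤ} (hi : 1 ≤ i) (hij : i ≤ j) (hj : j ≤ d) :
    vroot d i c ≤ vroot d j c := by
  have H : ∀ j, i ≤ j → j ≤ (d : ℤ) → vroot d i c ≤ vroot d j c := by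
    refine Int.le_induction (fun _ => le_refl _) ?_
    intro k hk ihk hk1
    exact le_trans (ihk (by omega)) (vroot_step d c k (by omega) (by omega))
  exact H j hij hj

lemma strictMonoOrAnti {P : Polynomial ℝ} {a b : ℝ}
    (hd : ∀ y ∈ Ioo a b, eval y P.derivative ≠ 0) :
    StrictMonoOn (fun y => eval y P) (Icc a b) ∨
      StrictAntiOn (fun y => eval y P) (Icc a b) := by
  have hderiv : ∀ y, deriv (fun x => eval x P) y = eval y P.derivative := fun y =>
    Polynomial.deriv ..
  by_cases hpos : ∀ y ∈ Ioo a b, 0 < eval y P.derivative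
  · left
    apply strictMonoOn_of_deriv_pos (convex_Icc a b) P.continuous.continuousOn
    intro y hy
    rw [interior_Icc] at hy
    rw [hderiv]; exact hpos y hy
  · right
    push_neg at hpos
    obtain ⟨y0, hy0, hy0le⟩ := hpos
    have hy0neg : eval y0 P.derivative < 0 := lt_of_le_of_ne hy0le (hd y0 hy0)
    have hneg : ∀ y ∈ Ioo a b, eval y P.derivative < 0 := by
      intro y hy
      rcases lt_or_ge (eval y P.derivative) 0 with h | h
      · exact h
      · exfalso
        have hypos : 0 < eval y P.derivative := lt_of_le_of_ne h (Ne.symm (hd y hy))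
        rcases le_total y0 y with hle | hle
        · have hIcc : Icc y0 y ⊆ Ioo a b := fun z hz =>
            ⟨lt_of_lt_of_le hy0.1 hz.1, lt_of_le_of_lt hz.2 hy.2⟩
          have := intermediate_value_Icc hle
            (P.derivative.continuous.continuousOn)
          have h0 : (0:ℝ) ∈ Icc (eval y0 P.derivative) (eval y P.derivative) :=
            ⟨le_of_lt hy0neg, le_of_lt hypos⟩
          obtain ⟨z, hz, hz0⟩ := this h0
          exact hd z (hIcc hz) hz0
        · have hIcc : Icc y y0 ⊆ Ioo a b := fun z hz =>
            ⟨lt_of_lt_of_le hy.1 hz.1, lt_of_le_of_lt hz.2 hy0.2⟩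
          have := intermediate_value_Icc' hle
            (P.derivative.continuous.continuousOn)
          have h0 : (0:ℝ) ∈ Icc (eval y0 P.derivative) (eval y P.derivative) :=
            ⟨le_of_lt hy0neg, le_of_lt hypos⟩
          obtain ⟨z, hz, hz0⟩ := this h0
          exact hd z (hIcc hz) hz0
    apply strictAntiOn_of_deriv_neg (convex_Icc a b) P.continuous.continuousOn
    intro y hy
    rw [interior_Icc] at hy
    rw [hderiv]; exact hneg y hy

lemma vroot_enum : ∀ (d : ℕ) (c : Fin d → ℝ) (x : ℝ), eval x (monicPoly d c) = 0 →
    ∃ j : ℤ, 1 ≤ j ∧ j ≤ d ∧ x = vroot d j c := by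
  intro d
  induction d with
  | zero => intro c x hx; simp [eval_monicPoly] at hx
  | succ n ih =>
    intro c x hx
    classical
    have hxb : |x| < bnd c := root_abs_lt_bnd_real _ _ hx
    set A : ℤ → ℝ := fun j => if 1 < j then vroot n (j - 1) (dCoeff c) else -(bnd c) with hA
    set B : ℤ → ℝ := fun j => if j < (n:ℤ) + 1 then vroot n j (dCoeff c) else bnd c with hB
    have hunfold : ∀ j : ℤ, vroot (n+1) j c = Rmin (A j) (B j) (monicPoly (n + 1) c) :=
      fun j => rfl
    set T : Finset ℤ := (Finset.Icc (1:ℤ) (n+1)).filter (fun j => A j ≤ x) with hT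
    have h1T : (1:ℤ) ∈ T := by
      rw [hT, Finset.mem_filter, Finset.mem_Icc]
      refine ⟨⟨le_refl 1, by omega⟩, ?_⟩
      have hA1 : A 1 = -(bnd c) := if_neg (by omega)
      rw [hA1]
      linarith [(abs_lt.mp hxb).1]
    set j := T.max' ⟨1, h1T⟩ with hj
    have hjT : j ∈ T := T.max'_mem _
    rw [hT, Finset.mem_filter, Finset.mem_Icc] at hjT
    obtain ⟨⟨hj1, hjn⟩, hAx⟩ := hjT
    have hxB : x ≤ B j := by
      by_cases hjlt : j < (n:ℤ) + 1
      · by_contra hgt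
        push_neg at hgt
        have hAj1 : A (j+1) = B j := by
          rw [hA, hB]
          simp only
          rw [if_pos (by omega : 1 < j + 1), if_pos hjlt]
          norm_num
        have hmem : j + 1 ∈ T := by
          rw [hT, Finset.mem_filter, Finset.mem_Icc]
          exact ⟨⟨by omega, by omega⟩, by rw [hAj1]; linarith⟩
        have := T.le_max' _ hmem
        omega
      · have hBj : B j = bnd c := if_neg hjlt
        rw [hBj]
        linarith [(abs_lt.mp hxb).2]
    have hAB : A j ≤ B j := le_trans hAx hxB
    obtain ⟨hmem, hmin⟩ := Rmin_spec (P := monicPoly (n+1) c) hAB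
    set r := Rmin (A j) (B j) (monicPoly (n + 1) c) with hr
    have hr0 : eval r (monicPoly (n+1) c) = 0 := by
      have := hmin x ⟨hAx, hxB⟩
      rw [hx] at this
      simpa using abs_eq_zero.mp (le_antisymm (by simpa using this) (abs_nonneg _))
    have hQ : ∀ y ∈ Ioo (A j) (B j), eval y (monicPoly n (dCoeff c)) ≠ 0 := by
      intro y hy hy0
      obtain ⟨j', hj'1, hj'n, hyeq⟩ := ih (dCoeff c) y hy0
      rcases le_or_gt j' (j-1) with hle | hgt
      · have h1j : 1 < j := by omega
        have hmono : vroot n j' (dCoeff c) ≤ vroot n (j-1) (dCoeff c) :=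
          vroot_mono _ hj'1 hle (by omega)
        have hAj : A j = vroot n (j-1) (dCoeff c) := if_pos h1j
        have := hy.1
        rw [hAj, hyeq] at this
        linarith
      · have hmono : vroot n j (dCoeff c) ≤ vroot n j' (dCoeff c) :=
          vroot_mono _ (by omega) (by omega) hj'n
        have hBj : B j = vroot n j (dCoeff c) := if_pos (by omega)
        have := hy.2
        rw [hBj, hyeq] at this
        linarith
    have hD : ∀ y ∈ Ioo (A j) (B j), eval y (derivative (monicPoly (n+1) c)) ≠ 0 := by
      intro y hy
      rw [derivative_monicPoly, eval_mul, eval_C]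
      exact mul_ne_zero (by positivity) (hQ y hy)
    have heq : x = r := by
      rcases strictMonoOrAnti hD with hSM | hSA
      · exact hSM.injOn ⟨hAx, hxB⟩ hmem (by rw [hx, hr0])
      · exact hSA.injOn ⟨hAx, hxB⟩ hmem (by rw [hx, hr0])
    exact ⟨j, hj1, by exact_mod_cast hjn, by rw [hunfold j, ← hr, ← heq]⟩

lemma bnd_sub_abs_le {d : ℕ} (c c' : Fin d → ℝ) :
    |bnd c - bnd c'| ≤ ∑ i, |c i - c' i| := by
  rw [abs_sub_le_iff]
  constructor
  · linarith [bnd_le_bnd_add c c']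
  · have h := bnd_le_bnd_add c' c
    have he : ∑ i, |c' i - c i| = ∑ i, |c i - c' i| :=
      Finset.sum_congr rfl fun i _ => abs_sub_comm _ _
    linarith [he ▸ h]

lemma continuous_bnd {d : ℕ} : Continuous (bnd : (Fin d → ℝ) → ℝ) := by
  rw [Metric.continuous_iff]
  intro c ε hε
  refine ⟨ε / (d + 1), by positivity, fun c' hc' => ?_⟩
  rw [Real.dist_eq]
  calc |bnd c' - bnd c| ≤ ∑ i, |c' i - c i| := bnd_sub_abs_le c' c
  _ ≤ ∑ _i : Fin d, dist c' c := by
      refine Finset.sum_le_sum fun i _ => ?_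
      rw [← Real.dist_eq]
      exact dist_le_pi_dist c' c i
  _ = d * dist c' c := by rw [Finset.sum_const]; simp [mul_comm]
  _ < ε := by
      rcases Nat.eq_zero_or_pos d with hd | hd
      · subst hd; simpa using hε
      · have hdd : (0:ℝ) < d := by exact_mod_cast hd
        have h2 : (d : ℝ) * dist c' c < d * (ε / (d+1)) := by
          exact (mul_lt_mul_iff_right₀ hdd).mpr hc'
        have h3 : (d : ℝ) * (ε / (d+1)) < ε := by
          rw [mul_div_assoc']
          rw [div_lt_iff₀ (by positivity)]
          nlinarith
        linarith

lemma continuous_dCoeff {d : ℕ} : Continuous (dCoeff : (Fin (d+1) → ℝ) → (Fin d → ℝ)) := by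
  apply continuous_pi
  intro i
  exact ((continuous_apply i.succ).mul continuous_const).div_const _

lemma continuous_eval2 {d : ℕ} :
    Continuous fun p : (Fin d → ℝ) × ℝ => eval p.2 (monicPoly d p.1) := by
  simp only [eval_monicPoly]
  exact (continuous_snd.pow d).add (continuous_finset_sum _ fun i _ =>
    ((continuous_apply i).comp continuous_fst).mul (continuous_snd.pow i))

lemma vroot_noroot (n : ℕ) (c : Fin (n+1) → ℝ) (j : ℤ) (hj1 : 1 ≤ j) (hjn : j ≤ (n:ℤ)+1) :
    ∀ y ∈ Ioo (if 1 < j then vroot n (j - 1) (dCoeff c) else -(bnd c))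
        (if j < (n:ℤ) + 1 then vroot n j (dCoeff c) else bnd c),
      eval y (monicPoly n (dCoeff c)) ≠ 0 := by
  intro y hy hy0
  obtain ⟨j', hj'1, hj'n, hyeq⟩ := vroot_enum n (dCoeff c) y hy0
  rcases le_or_gt j' (j-1) with hle | hgt
  · have h1j : 1 < j := by omega
    have hmono : vroot n j' (dCoeff c) ≤ vroot n (j-1) (dCoeff c) :=
      vroot_mono _ hj'1 hle (by omega)
    have := hy.1
    rw [if_pos h1j, hyeq] at this
    linarith
  · have hjlt : j < (n:ℤ) + 1 := by omega
    have hmono : vroot n j (dCoeff c) ≤ vroot n j' (dCoeff c) :=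
      vroot_mono _ (by omega) (by omega) hj'n
    have := hy.2
    rw [if_pos hjlt, hyeq] at this
    linarith

lemma argmin_lt_case {f : ℝ → ℝ} {a b x y : ℝ}
    (h : StrictMonoOn f (Icc a b) ∨ StrictAntiOn f (Icc a b))
    (hx : x ∈ Icc a b) (hy : y ∈ Icc a b)
    (hmx : ∀ z ∈ Icc a b, |f x| ≤ |f z|) (hmy : ∀ z ∈ Icc a b, |f y| ≤ |f z|)
    (hxy : x < y) : False := by
  have habs : |f x| = |f y| := le_antisymm (hmx y hy) (hmy x hx)
  set z := (x + y) / 2 with hz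
  have hzx : x < z := by rw [hz]; linarith
  have hzy : z < y := by rw [hz]; linarith
  have hzm : z ∈ Icc a b := ⟨le_trans hx.1 hzx.le, le_trans hzy.le hy.2⟩
  have key : |f z| < |f x| := by
    rcases h with hm | hm
    · have h1 : f x < f z := hm hx hzm hzx
      have h2 : f z < f y := hm hzm hy hzy
      have hx1 : -|f x| ≤ f x := neg_abs_le _
      have hy1 : f y ≤ |f y| := le_abs_self _
      rw [abs_lt]
      exact ⟨by linarith, by linarith [habs]⟩
    · have h1 : f z < f x := hm hx hzm hzx
      have h2 : f y < f z := hm hzm hy hzy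
      have hx1 : f x ≤ |f x| := le_abs_self _
      have hy1 : -|f y| ≤ f y := neg_abs_le _
      rw [abs_lt]
      exact ⟨by linarith [habs], by linarith⟩
  linarith [hmx z hzm]

lemma argmin_unique {f : ℝ → ℝ} {a b x y : ℝ}
    (h : StrictMonoOn f (Icc a b) ∨ StrictAntiOn f (Icc a b))
    (hx : x ∈ Icc a b) (hy : y ∈ Icc a b)
    (hmx : ∀ z ∈ Icc a b, |f x| ≤ |f z|) (hmy : ∀ z ∈ Icc a b, |f y| ≤ |f z|) : x = y := by
  rcases lt_trichotomy x y with hlt | heq | hgt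
  · exact absurd (argmin_lt_case h hx hy hmx hmy hlt) (by simp)
  · exact heq
  · exact absurd (argmin_lt_case h hy hx hmy hmx hgt) (by simp)

open Filter Topology

lemma vroot_cont : ∀ (d : ℕ) (j : ℤ), 1 ≤ j → j ≤ d →
    Continuous (fun c : Fin d → ℝ => vroot d j c) := by
  intro d
  induction d with
  | zero => intro j h1 h2; exact continuous_const
  | succ n ih =>
    intro j hj1 hjn1
    set a : (Fin (n+1) → ℝ) → ℝ :=
      fun c => if 1 < j then vroot n (j - 1) (dCoeff c) else -(bnd c) with haf
    set b : (Fin (n+1) → ℝ) → ℝ :=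
      fun c => if j < (n:ℤ) + 1 then vroot n j (dCoeff c) else bnd c with hbf
    have hvr : ∀ c, vroot (n+1) j c = Rmin (a c) (b c) (monicPoly (n+1) c) := fun c => rfl
    have ha : Continuous a := by
      rw [haf]
      by_cases h1j : 1 < j
      · simp only [if_pos h1j]
        exact (ih (j-1) (by omega) (by omega)).comp continuous_dCoeff
      · simp only [if_neg h1j]
        exact continuous_bnd.neg
    have hb : Continuous b := by
      rw [hbf]
      by_cases hjlt : j < (n:ℤ) + 1
      · simp only [if_pos hjlt]
        exact (ih j hj1 (by omega)).comp continuous_dCoeff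
      · simp only [if_neg hjlt]
        exact continuous_bnd
    rw [continuous_iff_continuousAt]
    intro c₀
    show Tendsto (fun c => vroot (n+1) j c) (𝓝 c₀) (𝓝 (vroot (n+1) j c₀))
    rcases lt_trichotomy (a c₀) (b c₀) with hlt | heq | hgt
    · -- main case : a c₀ < b c₀
      have hab₀ : a c₀ ≤ b c₀ := hlt.le
      obtain ⟨hmem₀, hmin₀⟩ := Rmin_spec (P := monicPoly (n+1) c₀) hab₀
      set x₀ := Rmin (a c₀) (b c₀) (monicPoly (n+1) c₀) with hx₀
      have hD : ∀ y ∈ Ioo (a c₀) (b c₀), eval y (derivative (monicPoly (n+1) c₀)) ≠ 0 := by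
        intro y hy
        rw [derivative_monicPoly, eval_mul, eval_C]
        refine mul_ne_zero (by positivity) ?_
        exact vroot_noroot n c₀ j hj1 (by exact_mod_cast hjn1) y hy
      have hSM := strictMonoOrAnti hD
      apply tendsto_of_subseq_tendsto
      intro ns hns
      set R := bnd c₀ + 1 with hR
      set x : ℕ → ℝ := fun m => vroot (n+1) j (ns m) with hxdef
      set x' : ℕ → ℝ := fun m => max (-R) (min R (x m)) with hx'def
      have hRpos : 0 < R := by have := one_le_bnd c₀; rw [hR]; linarith
      have hx'mem : ∀ m, x' m ∈ Icc (-R) R := fun m =>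
        ⟨le_max_left _ _, max_le (by linarith) (min_le_left _ _)⟩
      obtain ⟨xs, _, φ, hφ, hxs⟩ := tendsto_subseq_of_bounded
        (Metric.isBounded_Icc (-R) R) hx'mem
      refine ⟨φ, ?_⟩
      have hbnd_t : Tendsto (fun m => bnd (ns m)) atTop (𝓝 (bnd c₀)) :=
        (continuous_bnd.tendsto c₀).comp hns
      have hevR : ∀ᶠ m in atTop, bnd (ns m) < R :=
        hbnd_t.eventually_lt_const (by rw [hR]; linarith)
      have hxx' : ∀ᶠ m in atTop, x' m = x m := by
        filter_upwards [hevR] with m hm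
        have h1 : |x m| ≤ R := le_trans (vroot_abs_le _ hj1 hjn1) hm.le
        obtain ⟨h2, h3⟩ := abs_le.mp h1
        rw [hx'def]
        simp only
        rw [min_eq_right h3, max_eq_right h2]
      have hxφ : Tendsto (fun m => x (φ m)) atTop (𝓝 xs) :=
        hxs.congr' (hφ.tendsto_atTop.eventually hxx')
      set c' : ℕ → (Fin (n+1) → ℝ) := fun m => ns (φ m) with hc'def
      have hc' : Tendsto c' atTop (𝓝 c₀) := hns.comp hφ.tendsto_atTop
      have haT : Tendsto (fun m => a (c' m)) atTop (𝓝 (a c₀)) := (ha.tendsto _).comp hc'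
      have hbT : Tendsto (fun m => b (c' m)) atTop (𝓝 (b c₀)) := (hb.tendsto _).comp hc'
      have hev2 : ∀ᶠ m in atTop, a (c' m) < b (c' m) := haT.eventually_lt hbT hlt
      have hxspec : ∀ᶠ m in atTop, x (φ m) ∈ Icc (a (c' m)) (b (c' m)) ∧
          ∀ y ∈ Icc (a (c' m)) (b (c' m)),
            |eval (x (φ m)) (monicPoly (n+1) (c' m))| ≤ |eval y (monicPoly (n+1) (c' m))| := by
        filter_upwards [hev2] with m hm
        have := Rmin_spec (P := monicPoly (n+1) (c' m)) hm.le
        rw [hxdef]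
        simp only
        rw [hvr (c' m)]
        exact this
      have h1s : a c₀ ≤ xs :=
        le_of_tendsto_of_tendsto haT hxφ ((hxspec.mono fun m hm => hm.1.1))
      have h2s : xs ≤ b c₀ :=
        le_of_tendsto_of_tendsto hxφ hbT ((hxspec.mono fun m hm => hm.1.2))
      have hmins : ∀ z ∈ Icc (a c₀) (b c₀),
          |eval xs (monicPoly (n+1) c₀)| ≤ |eval z (monicPoly (n+1) c₀)| := by
        intro z hz
        set zseq : ℕ → ℝ := fun m => max (a (c' m)) (min (b (c' m)) z) with hzseq
        have hzT : Tendsto zseq atTop (𝓝 z) := by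
          have h := haT.max (hbT.min (tendsto_const_nhds (x := z)))
          rw [min_eq_right hz.2, max_eq_right hz.1] at h
          exact h
        have hLHS : Tendsto (fun m => |eval (x (φ m)) (monicPoly (n+1) (c' m))|) atTop
            (𝓝 |eval xs (monicPoly (n+1) c₀)|) := by
          have hp : Tendsto (fun m => ((c' m), x (φ m))) atTop (𝓝 (c₀, xs)) :=
            hc'.prodMk_nhds hxφ
          exact ((continuous_abs.comp continuous_eval2).tendsto _).comp hp
        have hRHS : Tendsto (fun m => |eval (zseq m) (monicPoly (n+1) (c' m))|) atTop
            (𝓝 |eval z (monicPoly (n+1) c₀)|) := by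
          have hp : Tendsto (fun m => ((c' m), zseq m)) atTop (𝓝 (c₀, z)) :=
            hc'.prodMk_nhds hzT
          exact ((continuous_abs.comp continuous_eval2).tendsto _).comp hp
        apply le_of_tendsto_of_tendsto hLHS hRHS
        filter_upwards [hev2, hxspec] with m hm hsp
        have hzmem : zseq m ∈ Icc (a (c' m)) (b (c' m)) :=
          ⟨le_max_left _ _, max_le hm.le (min_le_left _ _)⟩
        exact hsp.2 (zseq m) hzmem
      have hxseq : xs = x₀ := argmin_unique hSM ⟨h1s, h2s⟩ hmem₀ hmins hmin₀
      rw [hvr c₀, ← hx₀, ← hxseq]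
      exact hxφ
    · -- case a c₀ = b c₀
      have hx0 : vroot (n+1) j c₀ = a c₀ := by
        rw [hvr c₀]
        obtain ⟨hmem, _⟩ := Rmin_spec (P := monicPoly (n+1) c₀) heq.le
        have h1 := hmem.1
        have h2 := hmem.2
        linarith [heq]
      have hsand : ∀ c, min (a c) (b c) ≤ vroot (n+1) j c ∧
          vroot (n+1) j c ≤ max (a c) (b c) := by
        intro c
        by_cases hab : a c ≤ b c
        · obtain ⟨hmem, _⟩ := Rmin_spec (P := monicPoly (n+1) c) hab
          rw [hvr c]
          exact ⟨le_trans (min_le_left _ _) hmem.1, le_trans hmem.2 (le_max_right _ _)⟩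
        · rw [hvr c, Rmin_eq_left hab]
          exact ⟨min_le_left _ _, le_max_left _ _⟩
      have hminT : Tendsto (fun c => min (a c) (b c)) (𝓝 c₀) (𝓝 (a c₀)) := by
        have h := (ha.min hb).tendsto c₀
        rwa [show min (a c₀) (b c₀) = a c₀ by rw [← heq, min_self]] at h
      have hmaxT : Tendsto (fun c => max (a c) (b c)) (𝓝 c₀) (𝓝 (a c₀)) := by
        have h := (ha.max hb).tendsto c₀
        rwa [show max (a c₀) (b c₀) = a c₀ by rw [← heq, max_self]] at h
      rw [hx0]
      exact tendsto_of_tendsto_of_tendsto_of_le_of_le hminT hmaxT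
        (fun c => (hsand c).1) (fun c => (hsand c).2)
    · -- case b c₀ < a c₀
      have hev : ∀ᶠ c in 𝓝 c₀, b c < a c :=
        (hb.tendsto c₀).eventually_lt (ha.tendsto c₀) hgt
      have hT : Tendsto (fun c => vroot (n+1) j c) (𝓝 c₀) (𝓝 (a c₀)) := by
        apply Tendsto.congr' ?_ (ha.tendsto c₀)
        filter_upwards [hev] with c hc
        rw [hvr c, Rmin_eq_left (not_le.mpr hc)]
      rwa [show vroot (n+1) j c₀ = a c₀ by rw [hvr c₀, Rmin_eq_left (not_le.mpr hgt)]]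

lemma pow_card_le_multiset_prod (r : ℝ) (hr : 0 ≤ r) :
    ∀ (s : Multiset ℝ), (∀ y ∈ s, r ≤ y) → r ^ (Multiset.card s) ≤ s.prod := by
  intro s
  induction s using Multiset.induction with
  | empty => intro _; simp
  | cons a s ih =>
    intro h
    rw [Multiset.card_cons, Multiset.prod_cons, pow_succ, mul_comm]
    have ha : r ≤ a := h a (Multiset.mem_cons_self a s)
    have hs : r ^ Multiset.card s ≤ s.prod := ih fun y hy => h y (Multiset.mem_cons_of_mem hy)
    have h1 : (0:ℝ) ≤ r ^ Multiset.card s := pow_nonneg hr _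
    nlinarith

lemma eval_diff_le {d : ℕ} (c c' : Fin d → ℝ) {x B : ℝ} (hB : 1 ≤ B) (hx : |x| ≤ B) :
    |eval x (monicPoly d c) - eval x (monicPoly d c')| ≤ (∑ i, |c i - c' i|) * B ^ (d - 1) := by
  rw [eval_monicPoly, eval_monicPoly]
  have h1 : x ^ d + ∑ i : Fin d, c i * x ^ (i:ℕ) - (x ^ d + ∑ i : Fin d, c' i * x ^ (i:ℕ))
      = ∑ i : Fin d, (c i - c' i) * x ^ (i:ℕ) := by
    rw [add_sub_add_left_eq_sub, ← Finset.sum_sub_distrib]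
    exact Finset.sum_congr rfl fun i _ => by ring
  rw [h1]
  calc |∑ i : Fin d, (c i - c' i) * x ^ (i:ℕ)| ≤ ∑ i : Fin d, |(c i - c' i) * x ^ (i:ℕ)| :=
        Finset.abs_sum_le_sum_abs _ _
  _ ≤ (∑ i, |c i - c' i|) * B ^ (d - 1) := by
      rw [Finset.sum_mul]
      refine Finset.sum_le_sum fun i _ => ?_
      rw [abs_mul]
      refine mul_le_mul_of_nonneg_left ?_ (abs_nonneg _)
      rw [abs_pow]
      calc |x| ^ (i:ℕ) ≤ B ^ (i:ℕ) := pow_le_pow_left₀ (abs_nonneg x) hx _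
      _ ≤ B ^ (d-1) := pow_le_pow_right₀ hB (by have := i.2; omega)

lemma root_near {d : ℕ} (c' : Fin d → ℝ) {x r : ℝ} (hr : 0 ≤ r)
    (h : |eval x (monicPoly d c')| < r ^ d) :
    ∃ z ∈ ((monicPoly d c').map (algebraMap ℝ ℂ)).roots, ‖(x:ℂ) - z‖ ≤ r := by
  by_contra hc
  push_neg at hc
  set P' := (monicPoly d c').map (algebraMap ℝ ℂ) with hP'
  have hmonic : P'.Monic := (monicPoly_monic d c').map _
  have hsplits : P'.Splits := IsAlgClosed.splits _
  have hcard : Multiset.card P'.roots = d := by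
    rw [splits_iff_card_roots.mp hsplits, hP', (monicPoly_monic d c').natDegree_map,
      monicPoly_natDegree]
  have hprod : P' = (P'.roots.map fun a => X - C a).prod :=
    hsplits.eq_prod_roots_of_monic hmonic
  have heval : ‖eval (x:ℂ) P'‖ = (P'.roots.map fun a => ‖(x:ℂ) - a‖).prod := by
    conv_lhs => rw [hprod]
    rw [eval_multiset_prod, show ∀ m : Multiset ℂ, ‖m.prod‖ = (m.map (‖·‖)).prod from
      fun m => map_multiset_prod (normHom : ℂ →*₀ ℝ) m, Multiset.map_map, Multiset.map_map]
    refine congrArg _ (Multiset.map_congr rfl fun z hz => ?_)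
    simp
  have hre : ‖eval (x:ℂ) P'‖ = |eval x (monicPoly d c')| := by
    rw [hP', eval_map, show ((x:ℝ):ℂ) = algebraMap ℝ ℂ x from rfl, eval₂_at_apply]
    simp
  have hge : r ^ d ≤ (P'.roots.map fun a => ‖(x:ℂ) - a‖).prod := by
    have := pow_card_le_multiset_prod r hr (P'.roots.map fun a => ‖(x:ℂ) - a‖) ?_
    · rwa [Multiset.card_map, hcard] at this
    · intro y hy
      obtain ⟨z, hz, rfl⟩ := Multiset.mem_map.mp hy
      exact (hc z hz).le
  rw [← heval, hre] at hge
  linarith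

noncomputable def ballsSet : (d : ℕ) → (Fin d → ℝ) → ℝ → ℝ → Set ℝ
  | 0, _, _, _ => ∅
  | d + 1, c, r, δ =>
      (⋃ z ∈ (((monicPoly (d+1) c).map (algebraMap ℝ ℂ)).roots.toFinset : Finset ℂ),
        Icc (z.re - r) (z.re + r)) ∪
      Icc (bnd c - δ) (bnd c + δ) ∪ Icc (-(bnd c) - δ) (-(bnd c) + δ) ∪
      ballsSet d (dCoeff c) r δ

lemma good_mem_balls : ∀ (d : ℕ) (c c' : Fin d → ℝ) (x : ℝ) (r δ B : ℝ),
    0 ≤ r → 0 ≤ δ → 1 ≤ B → bnd c ≤ B → (∑ i, |c i - c' i|) ≤ δ →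
    (∀ m : ℕ, 1 ≤ m → m ≤ d → δ * B ^ (m-1) < r ^ m) →
    good d c x → x ∈ ballsSet d c' r δ := by
  intro d
  induction d with
  | zero => intro _ _ _ _ _ _ _ _ _ _ _ _ hg; exact absurd hg (by simp [good])
  | succ n ih =>
    intro c c' x r δ B hr hδ hB hbc hl1 hpow hg
    rcases hg with hg | hg | hg | hg
    · -- x is a root of monicPoly (n+1) c
      left; left; left
      have hxB : |x| ≤ B := le_trans (root_abs_lt_bnd_real c x hg).le hbc
      have hdiff : |eval x (monicPoly (n+1) c')| < r ^ (n+1) := by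
        have h1 : |eval x (monicPoly (n+1) c) - eval x (monicPoly (n+1) c')| ≤
            (∑ i, |c i - c' i|) * B ^ n := by
          have := eval_diff_le c c' hB hxB
          simpa using this
        have h2 : (∑ i, |c i - c' i|) * B ^ n ≤ δ * B ^ n :=
          mul_le_mul_of_nonneg_right hl1 (by positivity)
        have h3 : δ * B ^ n < r ^ (n+1) := by
          have := hpow (n+1) (by omega) (by omega)
          simpa using this
        rw [hg] at h1
        simp only [zero_sub, abs_neg] at h1
        linarith
      obtain ⟨z, hz, hzr⟩ := root_near c' hr hdiff
      refine mem_biUnion (Multiset.mem_toFinset.mpr hz) ?_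
      have hre : |x - z.re| ≤ r := by
        have h1 : ((x:ℂ) - z).re = x - z.re := by simp
        calc |x - z.re| = |((x:ℂ) - z).re| := by rw [h1]
        _ ≤ ‖(x:ℂ) - z‖ := Complex.abs_re_le_norm _
        _ ≤ r := hzr
      obtain ⟨h1, h2⟩ := abs_le.mp hre
      exact ⟨by linarith, by linarith⟩
    · -- x = bnd c
      left; left; right
      have := bnd_sub_abs_le c c'
      obtain ⟨h1, h2⟩ := abs_le.mp (le_trans this hl1)
      exact ⟨by rw [hg]; linarith, by rw [hg]; linarith⟩
    · -- x = -(bnd c)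
      left; right
      have := bnd_sub_abs_le c c'
      obtain ⟨h1, h2⟩ := abs_le.mp (le_trans this hl1)
      exact ⟨by rw [hg]; linarith, by rw [hg]; linarith⟩
    · -- recursive case
      right
      exact ih (dCoeff c) (dCoeff c') x r δ B hr hδ hB
        (le_trans (bnd_dCoeff_le c) hbc)
        (le_trans (dCoeff_l1 c c') hl1)
        (fun m h1 h2 => hpow m h1 (by omega)) hg

open MeasureTheory in
lemma balls_volume : ∀ (d : ℕ) (c' : Fin d → ℝ) (r δ : ℝ), 0 ≤ r → 0 ≤ δ →
    volume (ballsSet d c' r δ) ≤ ENNReal.ofReal (d*(d+1)*r + 4*d*δ) := by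
  intro d
  induction d with
  | zero => intro c' r δ hr hδ; simp [ballsSet]
  | succ n ih =>
    intro c' r δ hr hδ
    set F := (((monicPoly (n+1) c').map (algebraMap ℝ ℂ)).roots.toFinset : Finset ℂ) with hF
    set U := ⋃ z ∈ F, Icc (z.re - r) (z.re + r) with hU
    set I1 := Icc (bnd c' - δ) (bnd c' + δ) with hI1d
    set I2 := Icc (-(bnd c') - δ) (-(bnd c') + δ) with hI2d
    set Rest := ballsSet n (dCoeff c') r δ with hRest
    have hsplit : ballsSet (n+1) c' r δ = ((U ∪ I1) ∪ I2) ∪ Rest := rfl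
    have hcast : ((n:ENNReal)+1) = ENNReal.ofReal ((n:ℝ)+1) := by
      rw [show ((n:ℝ)+1) = ((n+1:ℕ):ℝ) by push_cast; ring, ENNReal.ofReal_natCast]
      push_cast; ring
    have hUvol : volume U ≤ ((n:ENNReal)+1) * ENNReal.ofReal (2*r) := by
      calc volume U ≤ ∑ z ∈ F, volume (Icc (z.re - r) (z.re + r)) :=
            measure_biUnion_finset_le _ _
      _ = ∑ _z ∈ F, ENNReal.ofReal (2*r) := Finset.sum_congr rfl fun z _ => by
            rw [Real.volume_Icc]; congr 1; ring
      _ = (F.card : ENNReal) * ENNReal.ofReal (2*r) := by rw [Finset.sum_const, nsmul_eq_mul]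
      _ ≤ _ := by
          refine mul_le_mul_left ?_ _
          have hcard : F.card ≤ n+1 := by
            refine le_trans (Multiset.toFinset_card_le _) ?_
            have h1 := Polynomial.card_roots' ((monicPoly (n+1) c').map (algebraMap ℝ ℂ))
            rwa [(monicPoly_monic (n+1) c').natDegree_map, monicPoly_natDegree] at h1
          calc (F.card : ENNReal) ≤ ((n+1 : ℕ) : ENNReal) := by
                exact_mod_cast Nat.cast_le.mpr hcard
          _ = (n:ENNReal)+1 := by push_cast; ring
    have hI1 : volume I1 = ENNReal.ofReal (2*δ) := by
      rw [hI1d, Real.volume_Icc]; congr 1; ring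
    have hI2 : volume I2 = ENNReal.ofReal (2*δ) := by
      rw [hI2d, Real.volume_Icc]; congr 1; ring
    rw [hsplit]
    calc volume (((U ∪ I1) ∪ I2) ∪ Rest)
        ≤ volume ((U ∪ I1) ∪ I2) + volume Rest := measure_union_le _ _
    _ ≤ (volume (U ∪ I1) + volume I2) + volume Rest :=
        add_le_add_left (measure_union_le _ _) _
    _ ≤ ((volume U + volume I1) + volume I2) + volume Rest :=
        add_le_add_left (add_le_add_left (measure_union_le _ _) _) _
    _ ≤ ((((n:ENNReal)+1) * ENNReal.ofReal (2*r) + ENNReal.ofReal (2*δ)) + ENNReal.ofReal (2*δ))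
          + ENNReal.ofReal ((n:ℝ)*((n:ℝ)+1)*r + 4*(n:ℝ)*δ) :=
        add_le_add (add_le_add (add_le_add hUvol hI1.le) hI2.le) (ih (dCoeff c') r δ hr hδ)
    _ ≤ ENNReal.ofReal ((((n+1:ℕ)):ℝ) * ((((n+1:ℕ)):ℝ) + 1) * r + 4 * (((n+1:ℕ)):ℝ) * δ) := by
        rw [hcast, ← ENNReal.ofReal_mul (by positivity),
          ← ENNReal.ofReal_add (by positivity) (by positivity),
          ← ENNReal.ofReal_add (by positivity) (by positivity),
          ← ENNReal.ofReal_add (by positivity) (by positivity)]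
        apply ENNReal.ofReal_le_ofReal
        push_cast
        nlinarith [hr, hδ, sq_nonneg ((n:ℝ))]

lemma vroot_one (c : Fin 1 → ℝ) : vroot 1 1 c = -(c 0) := by
  have h0 : vroot 1 1 c = Rmin (if (1:ℤ) < 1 then vroot 0 (1-1) (dCoeff c) else -(bnd c))
      (if (1:ℤ) < ((0:ℕ):ℤ) + 1 then vroot 0 1 (dCoeff c) else bnd c) (monicPoly 1 c) := rfl
  rw [if_neg (by norm_num), if_neg (by norm_num)] at h0
  have hab : -(bnd c) ≤ bnd c := by linarith [one_le_bnd c]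
  obtain ⟨hmem, hmin⟩ := Rmin_spec (P := monicPoly 1 c) hab
  have heval : ∀ x : ℝ, eval x (monicPoly 1 c) = x + c 0 := by
    intro x
    rw [eval_monicPoly]
    simp
  have hc0 : -(c 0) ∈ Icc (-(bnd c)) (bnd c) := by
    have h1 : |c 0| ≤ bnd c - 1 := by
      have := abs_le_sup c 0
      unfold bnd; linarith
    obtain ⟨h2, h3⟩ := abs_le.mp h1
    exact ⟨by linarith, by linarith⟩
  have h1 := hmin _ hc0
  rw [heval, heval] at h1
  simp only [neg_add_cancel, abs_zero] at h1
  have h2 : Rmin (-(bnd c)) (bnd c) (monicPoly 1 c) + c 0 = 0 :=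
    by have := abs_eq_zero.mp (le_antisymm h1 (abs_nonneg _)); linarith [this]
  rw [h0]; linarith

lemma region_abs_le {d : ℕ} {c : Fin d → ℝ} {M : ℝ} (hM : 1 ≤ M)
    (hc : ∀ i : Fin d, |c i| ^ (d - (i : ℕ)) ≤ M) (i : Fin d) : |c i| ≤ M := by
  rcases le_total (|c i|) 1 with h | h
  · linarith
  · calc |c i| ≤ |c i| ^ (d - (i:ℕ)) := le_self_pow₀ h (by have := i.2; omega)
    _ ≤ M := hc i

lemma bnd_le_region {d : ℕ} {c : Fin d → ℝ} {M : ℝ} (hd : 1 ≤ d) (hM : 1 ≤ M)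
    (habs : ∀ i : Fin d, |c i| ≤ M) : bnd c ≤ 1 + M := by
  have : Nonempty (Fin d) := ⟨⟨0, by omega⟩⟩
  have h : (⨆ i, |c i|) ≤ M := ciSup_le habs
  unfold bnd; linarith

set_option maxHeartbeats 2000000 in
open MeasureTheory in
theorem vroot_uniform_continuity
    (d j : ℕ) (hj1 : 1 ≤ j) (hjd : j ≤ d) (M ε : ℝ) (hM : 1 ≤ M) (hε : 0 < ε)
    (c c' : Fin d → ℝ)
    (hc : ∀ i : Fin d, |c i| ^ (d - (i : ℕ)) ≤ M)
    (hc' : ∀ i : Fin d, |c' i| ^ (d - (i : ℕ)) ≤ M)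
    (hdist : ∑ i : Fin d, |c i - c' i| <
      2 * M * (ε / (d * (d + 1) * (2 * d - 1) * M)) ^ d) :
    |vroot d (j : ℤ) c - vroot d (j : ℤ) c'| < ε := by
  have hd1 : 1 ≤ d := le_trans hj1 hjd
  have hM0 : (0:ℝ) < M := by linarith
  rcases eq_or_lt_of_le hd1 with hd1' | hd2
  · -- d = 1
    subst hd1'
    have hj : j = 1 := le_antisymm hjd hj1
    subst hj
    rw [Nat.cast_one, vroot_one, vroot_one]
    have hsum1 : ∑ i : Fin 1, |c i - c' i| = |c 0 - c' 0| := by simp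
    have hrhs : 2 * M * (ε / (((1:ℕ):ℝ) * (((1:ℕ):ℝ) + 1) * (2 * ((1:ℕ):ℝ) - 1) * M)) ^ (1:ℕ)
        = ε := by
      push_cast
      rw [pow_one]
      field_simp
      ring
    rw [hsum1, hrhs] at hdist
    have heq : -(c 0) - -(c' 0) = -(c 0 - c' 0) := by ring
    rw [heq, abs_neg]
    exact hdist
  · -- d ≥ 2
    have hdR : (2:ℝ) ≤ (d:ℝ) := by exact_mod_cast hd2
    have habs : ∀ i, |c i| ≤ M := region_abs_le hM hc
    have habs' : ∀ i, |c' i| ≤ M := region_abs_le hM hc'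
    by_cases hbig : 2 * (1 + M) < ε
    · have h1 : |vroot d (j:ℤ) c| ≤ bnd c :=
        vroot_abs_le c (by exact_mod_cast hj1) (by exact_mod_cast hjd)
      have h2 : |vroot d (j:ℤ) c'| ≤ bnd c' :=
        vroot_abs_le c' (by exact_mod_cast hj1) (by exact_mod_cast hjd)
      have h3 : bnd c ≤ 1 + M := bnd_le_region hd1 hM habs
      have h4 : bnd c' ≤ 1 + M := bnd_le_region hd1 hM habs'
      calc |vroot d (j:ℤ) c - vroot d (j:ℤ) c'| ≤ |vroot d (j:ℤ) c| + |vroot d (j:ℤ) c'| :=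
            abs_sub _ _
      _ ≤ 2 * (1 + M) := by linarith
      _ < ε := hbig
    · push_neg at hbig
      set D := (d:ℝ) with hDdef
      have hDpos : (0:ℝ) < D := by linarith
      set ε' := ε / (D * (D + 1) * (2 * D - 1) * M) with hε'def
      have hden : 0 < D * (D+1) * (2*D-1) * M :=
        mul_pos (mul_pos (mul_pos (by linarith : (0:ℝ) < D) (by linarith : (0:ℝ) < D+1))
          (by linarith : (0:ℝ) < 2*D-1)) hM0
      have hε'pos : 0 < ε' := div_pos hε hden
      have h18 : (18:ℝ) ≤ D*(D+1)*(2*D-1) := by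
        nlinarith [mul_nonneg (mul_nonneg (show (0:ℝ) ≤ D - 2 by linarith)
          (show (0:ℝ) ≤ D by linarith)) (show (0:ℝ) ≤ D by linarith),
          mul_nonneg (show (0:ℝ) ≤ D - 2 by linarith) (show (0:ℝ) ≤ D by linarith),
          sq_nonneg (D-2)]
      have hε'29 : ε' ≤ 2/9 := by
        rw [hε'def, div_le_iff₀ hden]
        nlinarith [mul_le_mul_of_nonneg_right h18 (le_of_lt hM0)]
      set δ₀ := ∑ i, |c i - c' i| with hδ₀def
      have hδ₀nonneg : 0 ≤ δ₀ := Finset.sum_nonneg fun i _ => abs_nonneg _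
      have hdist' : δ₀ < 2 * M * ε' ^ d := hdist
      set B := 2 * M with hBdef
      have hB1 : 1 ≤ B := by rw [hBdef]; linarith
      have hbndc : bnd c ≤ B := le_trans (bnd_le_region hd1 hM habs) (by rw [hBdef]; linarith)
      set r := B * ε' with hrdef
      have hBpos : 0 < B := by rw [hBdef]; linarith
      have hrpos : 0 < r := by rw [hrdef]; positivity
      clear_value D ε' δ₀ B r
      have hpow : ∀ m : ℕ, 1 ≤ m → m ≤ d → δ₀ * B ^ (m-1) < r ^ m := by
        intro m h1m hmd
        have hε'1 : ε' ≤ 1 := by linarith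
        have h1 : ε' ^ d ≤ ε' ^ m := pow_le_pow_of_le_one hε'pos.le hε'1 hmd
        have h2 : δ₀ < B * ε' ^ m :=
          lt_of_lt_of_le hdist' (mul_le_mul_of_nonneg_left h1 hBpos.le)
        calc δ₀ * B^(m-1) < (B * ε'^m) * B^(m-1) :=
              mul_lt_mul_of_pos_right h2 (by positivity)
        _ = r ^ m := by
            have hm : m - 1 + 1 = m := by omega
            have hBm : B ^ m = B ^ (m-1) * B := by
              conv_lhs => rw [← hm]
              rw [pow_succ]
            rw [hrdef, mul_pow, hBm]
            ring
      set cpath : ℝ → (Fin d → ℝ) := fun t => fun i => c i + t * (c' i - c i) with hcp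
      have hγc : Continuous (fun t => vroot d (j:ℤ) (cpath t)) :=
        (vroot_cont d j (by exact_mod_cast hj1) (by exact_mod_cast hjd)).comp
          (continuous_pi fun i => continuous_const.add (continuous_id.mul continuous_const))
      have hmem_t : ∀ t ∈ Icc (0:ℝ) 1, vroot d (j:ℤ) (cpath t) ∈ ballsSet d c r δ₀ := by
        intro t ht
        refine good_mem_balls d (cpath t) c _ r δ₀ B hrpos.le hδ₀nonneg hB1 ?_ ?_ hpow ?_
        · refine le_trans (bnd_le_region hd1 hM ?_) (by rw [hBdef]; linarith)
          intro i
          have he : cpath t i = (1-t)*(c i) + t*(c' i) := by rw [hcp]; ring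
          calc |cpath t i| = |(1-t)*(c i) + t*(c' i)| := by rw [he]
          _ ≤ |(1-t)*(c i)| + |t*(c' i)| := abs_add_le _ _
          _ = (1-t)*|c i| + t*|c' i| := by
              rw [abs_mul, abs_mul, abs_of_nonneg (by linarith [ht.2] : (0:ℝ) ≤ 1 - t),
                abs_of_nonneg ht.1]
          _ ≤ (1-t)*M + t*M := add_le_add
              (mul_le_mul_of_nonneg_left (habs i) (by linarith [ht.2]))
              (mul_le_mul_of_nonneg_left (habs' i) ht.1)
          _ = M := by ring
        · have hterm : ∀ i : Fin d, |cpath t i - c i| ≤ |c i - c' i| := by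
            intro i
            have he : cpath t i - c i = t * (c' i - c i) := by rw [hcp]; ring
            rw [he, abs_mul, abs_of_nonneg ht.1, abs_sub_comm (c' i)]
            nlinarith [abs_nonneg (c i - c' i), ht.1, ht.2]
          rw [hδ₀def]
          exact Finset.sum_le_sum fun i _ => hterm i
        · exact vroot_good d (j:ℤ) (cpath t) (by exact_mod_cast hj1) (by exact_mod_cast hjd)
      set u := vroot d (j:ℤ) c with hu
      set v := vroot d (j:ℤ) c' with hv
      have hγ0 : vroot d (j:ℤ) (cpath 0) = u := by
        rw [hu]
        congr 1
        funext i
        rw [hcp]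
        simp
      have hγ1 : vroot d (j:ℤ) (cpath 1) = v := by
        rw [hv]
        congr 1
        funext i
        rw [hcp]
        simp
      have himg : Icc (min u v) (max u v) ⊆ ballsSet d c r δ₀ := by
        have hpre : IsPreconnected ((fun t => vroot d (j:ℤ) (cpath t)) '' Icc 0 1) :=
          isPreconnected_Icc.image _ hγc.continuousOn
        have hu' : u ∈ (fun t => vroot d (j:ℤ) (cpath t)) '' Icc 0 1 :=
          ⟨0, ⟨le_refl 0, zero_le_one⟩, hγ0⟩
        have hv' : v ∈ (fun t => vroot d (j:ℤ) (cpath t)) '' Icc 0 1 :=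
          ⟨1, ⟨zero_le_one, le_refl 1⟩, hγ1⟩
        have hsub : (fun t => vroot d (j:ℤ) (cpath t)) '' Icc 0 1 ⊆ ballsSet d c r δ₀ := by
          rintro y ⟨t, ht, rfl⟩
          exact hmem_t t ht
        intro y hy
        apply hsub
        rcases le_total u v with h | h
        · rw [min_eq_left h, max_eq_right h] at hy
          exact hpre.Icc_subset hu' hv' hy
        · rw [min_eq_right h, max_eq_left h] at hy
          exact hpre.Icc_subset hv' hu' hy
      have hvol : ENNReal.ofReal (max u v - min u v) ≤ ENNReal.ofReal (D*(D+1)*r + 4*D*δ₀) := by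
        calc ENNReal.ofReal (max u v - min u v) = volume (Icc (min u v) (max u v)) :=
              (Real.volume_Icc).symm
        _ ≤ volume (ballsSet d c r δ₀) := measure_mono himg
        _ ≤ ENNReal.ofReal (D*(D+1)*r + 4*D*δ₀) := by
            rw [hDdef]
            exact balls_volume d c r δ₀ hrpos.le hδ₀nonneg
      have hle : max u v - min u v ≤ D*(D+1)*r + 4*D*δ₀ := by
        refine (ENNReal.ofReal_le_ofReal_iff ?_).mp hvol
        positivity
      have habsuv : |u - v| = max u v - min u v := by
        rw [abs_sub_comm]
        exact (max_sub_min_eq_abs u v).symm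
      have hεeq : ε = D*(D+1)*(2*D-1)*M*ε' := by
        rw [hε'def]
        rw [show D*(D+1)*(2*D-1)*M*(ε/(D*(D+1)*(2*D-1)*M))
          = ε/(D*(D+1)*(2*D-1)*M)*(D*(D+1)*(2*D-1)*M) from mul_comm _ _]
        rw [div_mul_cancel₀ _ (ne_of_gt hden)]
      have hδ₀' : δ₀ < (4/9) * M * ε' := by
        have h1 : ε' ^ d ≤ ε' ^ 2 := pow_le_pow_of_le_one hε'pos.le (by linarith) hd2
        have h2 : ε' ^ 2 ≤ (2/9) * ε' := by
          nlinarith [mul_le_mul_of_nonneg_right hε'29 hε'pos.le]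
        have h3 : B * ε' ^ d ≤ B * ((2/9)*ε') := by
          refine mul_le_mul_of_nonneg_left ?_ hBpos.le
          exact le_trans h1 h2
        calc δ₀ < B * ε'^d := hdist'
        _ ≤ B * ((2/9)*ε') := h3
        _ = (4/9)*M*ε' := by rw [hBdef]; ring
      have hfinal : D*(D+1)*r + 4*D*δ₀ < ε := by
        rw [hεeq, hrdef, hBdef]
        have hkey : 2*(D+1) + 16/9 ≤ (D+1)*(2*D-1) := by nlinarith [sq_nonneg (D-2)]
        have hMε' : 0 < M * ε' := mul_pos hM0 hε'pos
        nlinarith [mul_le_mul_of_nonneg_right hkey (le_of_lt (mul_pos hDpos hMε')),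
          mul_lt_mul_of_pos_left hδ₀' (show (0:ℝ) < 4*D by linarith)]
      calc |u - v| = max u v - min u v := habsuv
      _ ≤ D*(D+1)*r + 4*D*δ₀ := hle
      _ < ε := hfinal
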